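/- If M and N are L_{∞,λ}-equivalent structures (there is a back-and-forth system contained in ℱ_λ(M,N)), then every member of the back-and-forth system has Rank ≥ α for every ordinal α; in particular KC_λ(M) = KC_λ(N), where KC_λ(M) is the least ordinal α such that for all f ∈ ℱ_λ(M,M), Rank(f) ≥ α implies Rank(f) ≥ α+1. -/

import Mathlib

open FirstOrder Cardinal Set

universe u

/-- `G` is the graph of a partial elementary map from `M` to `N`. -/
def IsPartialElem (L : FirstOrder.Language) (M N : Type u) [L.Structure M] [L.Structure N]
    (G : Set (M × N)) : Prop :=
  ∀ (n : ℕ) (φ : L.Formula (Fin n)) (v : Fin n → M × N),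
    (∀ i, v i ∈ G) → (φ.Realize (fun i => (v i).1) ↔ φ.Realize (fun i => (v i).2))

/-- `G` belongs to `ℱ_λ(M,N)`: a partial elementary map of domain size `< λ`. -/
def InF (L : FirstOrder.Language) (M N : Type u) [L.Structure M] [L.Structure N]
    (lam : Cardinal.{u}) (G : Set (M × N)) : Prop :=
  IsPartialElem L M N G ∧ Cardinal.mk G < lam

/-- `RankGe L M N lam α G` means `Rank(G) ≥ α` in the sense of Karp complexity: `Rank(f) ≥ 0`
always, `Rank(f) ≥ α` for limit `α` iff `Rank(f) ≥ β` for all `β < α`, and `Rank(f) ≥ β + 1`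
iff every subset of size `< λ` of either side can be absorbed into an extension of `f` in
`ℱ_λ(M,N)` of rank `≥ β`. -/
noncomputable def RankGe (L : FirstOrder.Language) (M N : Type u)
    [L.Structure M] [L.Structure N] (lam : Cardinal.{u}) :
    Ordinal → Set (M × N) → Prop :=
  Ordinal.lt_wf.fix fun α IH G =>
    ∀ β (h : β < α),
      (∀ C : Set M, Cardinal.mk C < lam →
        ∃ G', InF L M N lam G' ∧ G ⊆ G' ∧ C ⊆ Prod.fst '' G' ∧ IH β h G') ∧
      (∀ C : Set N, Cardinal.mk C < lam →
        ∃ G', InF L M N lam G' ∧ G ⊆ G' ∧ C ⊆ Prod.snd '' G' ∧ IH β h G')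

/-- The least ordinal `α` such that `Rank(f) ≥ α` implies `Rank(f) ≥ α + 1` for every
`f ∈ ℱ_λ(M,M)`: the `λ`-Karp complexity of `M`. -/
noncomputable def KC (L : FirstOrder.Language) (M : Type u) [L.Structure M]
    (lam : Cardinal.{u}) : Ordinal :=
  sInf {α | ∀ G : Set (M × M), InF L M M lam G →
    RankGe L M M lam α G → RankGe L M M lam (α + 1) G}

/-- A back-and-forth system contained in `ℱ_λ(M,N)`, witnessing `L_{∞,λ}`-equivalence. -/
def IsBFSys (L : FirstOrder.Language) (M N : Type u) [L.Structure M] [L.Structure N]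
    (lam : Cardinal.{u}) (F : Set (Set (M × N))) : Prop :=
  F.Nonempty ∧ (∀ G ∈ F, InF L M N lam G) ∧
    (∀ G ∈ F, ∀ C : Set M, Cardinal.mk C < lam →
      ∃ G' ∈ F, G ⊆ G' ∧ C ⊆ Prod.fst '' G') ∧
    (∀ G ∈ F, ∀ C : Set N, Cardinal.mk C < lam →
      ∃ G' ∈ F, G ⊆ G' ∧ C ⊆ Prod.snd '' G')

section Aux

variable {L : FirstOrder.Language} {M N : Type u} [L.Structure M] [L.Structure N]
    {lam : Cardinal.{u}}

lemma rankGe_iff (α : Ordinal) (G : Set (M × N)) :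
    RankGe L M N lam α G ↔ ∀ β, β < α →
      (∀ C : Set M, Cardinal.mk C < lam →
        ∃ G', InF L M N lam G' ∧ G ⊆ G' ∧ C ⊆ Prod.fst '' G' ∧ RankGe L M N lam β G') ∧
      (∀ C : Set N, Cardinal.mk C < lam →
        ∃ G', InF L M N lam G' ∧ G ⊆ G' ∧ C ⊆ Prod.snd '' G' ∧ RankGe L M N lam β G') := by
  unfold RankGe
  rw [WellFounded.fix_eq]

lemma rankGe_anti {α : Ordinal} {G G' : Set (M × N)} (hsub : G ⊆ G')
    (h : RankGe L M N lam α G') : RankGe L M N lam α G := by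
  rw [rankGe_iff] at h ⊢
  intro β hβ
  obtain ⟨h1, h2⟩ := h β hβ
  constructor
  · intro C hC
    obtain ⟨G'', a, b, c, d⟩ := h1 C hC
    exact ⟨G'', a, hsub.trans b, c, d⟩
  · intro C hC
    obtain ⟨G'', a, b, c, d⟩ := h2 C hC
    exact ⟨G'', a, hsub.trans b, c, d⟩

/-- A partial elementary map is a partial function: second coordinate determined by first. -/
lemma elem_fun {G : Set (M × N)} (hG : IsPartialElem L M N G)
    {a : M} {b b' : N} (h1 : (a, b) ∈ G) (h2 : (a, b') ∈ G) : b = b' := by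
  have := hG 2 ((Language.Term.var 0).equal (Language.Term.var 1))
    (fun i => if i = 0 then (a, b) else (a, b')) (by
      intro i; fin_cases i <;> simp [h1, h2])
  simp only [Language.Formula.realize_equal, Language.Term.realize_var] at this
  simpa using this.mp rfl

/-- A partial elementary map is injective: first coordinate determined by second. -/
lemma elem_inj {G : Set (M × N)} (hG : IsPartialElem L M N G)
    {a a' : M} {b : N} (h1 : (a, b) ∈ G) (h2 : (a', b) ∈ G) : a = a' := by
  have := hG 2 ((Language.Term.var 0).equal (Language.Term.var 1))
    (fun i => if i = 0 then (a, b) else (a', b)) (by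
      intro i; fin_cases i <;> simp [h1, h2])
  simp only [Language.Formula.realize_equal, Language.Term.realize_var] at this
  simpa using this.mpr rfl

/-- Composition `G₂ ∘ H ∘ G₁⁻¹ : N → N` of partial maps `G₁ G₂ : M → N`, `H : M → M`. -/
def myComp (G₁ : Set (M × N)) (H : Set (M × M)) (G₂ : Set (M × N)) : Set (N × N) :=
  {p | ∃ a a', (a, p.1) ∈ G₁ ∧ (a, a') ∈ H ∧ (a', p.2) ∈ G₂}

lemma myComp_mono {G₁ G₁' G₂ G₂' : Set (M × N)} {H H' : Set (M × M)}
    (h1 : G₁ ⊆ G₁') (h : H ⊆ H') (h2 : G₂ ⊆ G₂') : myComp G₁ H G₂ ⊆ myComp G₁' H' G₂' := by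
  rintro p ⟨a, a', u, v, w⟩
  exact ⟨a, a', h1 u, h v, h2 w⟩

lemma myComp_elem {G₁ G₂ : Set (M × N)} {H : Set (M × M)}
    (hG₁ : IsPartialElem L M N G₁) (hH : IsPartialElem L M M H)
    (hG₂ : IsPartialElem L M N G₂) : IsPartialElem L N N (myComp G₁ H G₂) := by
  intro n φ v hv
  choose a a' h1 h2 h3 using hv
  have e1 := hG₁ n φ (fun i => (a i, (v i).1)) (fun i => h1 i)
  have e2 := hH n φ (fun i => (a i, a' i)) (fun i => h2 i)
  have e3 := hG₂ n φ (fun i => (a' i, (v i).2)) (fun i => h3 i)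
  simp only at e1 e2 e3
  rw [← e1, e2, e3]

lemma myComp_card {G₁ G₂ : Set (M × N)} {H : Set (M × M)}
    (hG₁ : IsPartialElem L M N G₁) (hG₂ : IsPartialElem L M N G₂) :
    Cardinal.mk (myComp G₁ H G₂) ≤ Cardinal.mk H := by
  have hex : ∀ p : myComp G₁ H G₂, ∃ q : M × M,
      q ∈ H ∧ (q.1, (p : N × N).1) ∈ G₁ ∧ (q.2, (p : N × N).2) ∈ G₂ := by
    rintro ⟨p, a, a', u, v, w⟩
    exact ⟨(a, a'), v, u, w⟩
  choose g hg1 hg2 hg3 using hex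
  refine Cardinal.mk_le_of_injective (f := fun p => (⟨g p, hg1 p⟩ : H)) ?_
  intro p q h
  have hgeq : g p = g q := congrArg Subtype.val h
  apply Subtype.ext
  apply Prod.ext
  · exact elem_fun hG₁ (hg2 p) (hgeq ▸ hg2 q)
  · exact elem_fun hG₂ (hg3 p) (hgeq ▸ hg3 q)

lemma myComp_inF {G₁ G₂ : Set (M × N)} {H : Set (M × M)}
    (hG₁ : IsPartialElem L M N G₁) (hG₂ : IsPartialElem L M N G₂)
    (hH : InF L M M lam H) : InF L N N lam (myComp G₁ H G₂) :=
  ⟨myComp_elem hG₁ hH.1 hG₂, lt_of_le_of_lt (myComp_card hG₁ hG₂) hH.2⟩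

lemma swap_elem {G : Set (M × N)} (hG : IsPartialElem L M N G) :
    IsPartialElem L N M (Prod.swap '' G) := by
  intro n φ v hv
  have hv' : ∀ i, (Prod.swap (v i)) ∈ G := by
    intro i
    obtain ⟨p, hp, hpv⟩ := hv i
    simpa [← hpv] using hp
  exact (hG n φ (fun i => Prod.swap (v i)) hv').symm

lemma mem_swap_iff {G : Set (M × N)} {b : N} {a : M} :
    (b, a) ∈ Prod.swap '' G ↔ (a, b) ∈ G := by
  constructor
  · rintro ⟨p, hp, hpv⟩
    obtain ⟨p1, p2⟩ := p
    simp only [Prod.swap_prod_mk, Prod.mk.injEq] at hpv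
    rwa [← hpv.1, ← hpv.2]
  · intro h
    exact ⟨(a, b), h, rfl⟩

lemma isBFSys_swap {F : Set (Set (M × N))} (hF : IsBFSys L M N lam F) :
    IsBFSys L N M lam ((Set.image Prod.swap) '' F) := by
  obtain ⟨hne, hinF, hforth, hback⟩ := hF
  refine ⟨hne.image _, ?_, ?_, ?_⟩
  · rintro G ⟨G₀, hG₀, rfl⟩
    refine ⟨swap_elem (hinF G₀ hG₀).1, ?_⟩
    rw [Cardinal.mk_image_eq Prod.swap_injective]
    exact (hinF G₀ hG₀).2
  · rintro G ⟨G₀, hG₀, rfl⟩ C hC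
    obtain ⟨G', hG'F, hsub, hcov⟩ := hback G₀ hG₀ C hC
    refine ⟨Prod.swap '' G', ⟨G', hG'F, rfl⟩, Set.image_mono hsub, ?_⟩
    intro c hc
    obtain ⟨p, hp, hpc⟩ := hcov hc
    exact ⟨Prod.swap p, ⟨p, hp, rfl⟩, hpc⟩
  · rintro G ⟨G₀, hG₀, rfl⟩ C hC
    obtain ⟨G', hG'F, hsub, hcov⟩ := hforth G₀ hG₀ C hC
    refine ⟨Prod.swap '' G', ⟨G', hG'F, rfl⟩, Set.image_mono hsub, ?_⟩
    intro c hc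
    obtain ⟨p, hp, hpc⟩ := hcov hc
    exact ⟨Prod.swap p, ⟨p, hp, rfl⟩, hpc⟩

lemma card_sep_lt {G : Set (M × N)} (hG : Cardinal.mk G < lam) (P : M × N → Prop) :
    Cardinal.mk (Prod.fst '' {p ∈ G | P p}) < lam :=
  lt_of_le_of_lt (le_trans Cardinal.mk_image_le
    (Cardinal.mk_le_mk_of_subset (Set.sep_subset _ _))) hG

/-- Key transfer lemma: composing a partial map `M → M` of rank `≥ α` with two members of a
back-and-forth system yields a partial map `N → N` of rank `≥ α`. -/
lemma transfer {F : Set (Set (M × N))} (hF : IsBFSys L M N lam F) :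
    ∀ α : Ordinal, ∀ H : Set (M × M), InF L M M lam H → RankGe L M M lam α H →
    ∀ G₁ ∈ F, ∀ G₂ ∈ F, RankGe L N N lam α (myComp G₁ H G₂) := by
  intro α
  induction α using Ordinal.induction with
  | h α IH =>
  intro H hH hrank G₁ hG₁ G₂ hG₂
  obtain ⟨hne, hinF, hforth, hback⟩ := hF
  rw [rankGe_iff]
  intro β hβ
  constructor
  · -- extend on the left (first coordinate of `N × N`)
    intro C hC
    obtain ⟨G₁', hG₁'F, hsub₁, hcov₁⟩ := hback G₁ hG₁ C hC
    set D : Set M := Prod.fst '' {p ∈ G₁' | p.2 ∈ C} with hD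
    have hDlt : Cardinal.mk D < lam := card_sep_lt (hinF G₁' hG₁'F).2 _
    obtain ⟨H₂, hH₂, hHH₂, hDcov, hH₂rank⟩ := ((rankGe_iff α H).1 hrank β hβ).1 D hDlt
    have hsndlt : Cardinal.mk (Prod.snd '' H₂) < lam :=
      lt_of_le_of_lt Cardinal.mk_image_le hH₂.2
    obtain ⟨G₂', hG₂'F, hsub₂, hcov₂⟩ := hforth G₂ hG₂ (Prod.snd '' H₂) hsndlt
    refine ⟨myComp G₁' H₂ G₂',
      myComp_inF (hinF G₁' hG₁'F).1 (hinF G₂' hG₂'F).1 hH₂,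
      myComp_mono hsub₁ hHH₂ hsub₂, ?_,
      IH β hβ H₂ hH₂ hH₂rank G₁' hG₁'F G₂' hG₂'F⟩
    intro c hc
    obtain ⟨p, hp, hpc⟩ := hcov₁ hc
    have haD : p.1 ∈ D := ⟨p, ⟨hp, by rwa [hpc]⟩, rfl⟩
    obtain ⟨q, hq, hqa⟩ := hDcov haD
    have : q.2 ∈ Prod.snd '' H₂ := ⟨q, hq, rfl⟩
    obtain ⟨r, hr, hrq⟩ := hcov₂ this
    refine ⟨(c, r.2), ⟨p.1, q.2, ?_, ?_, ?_⟩, rfl⟩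
    · rw [← hpc]; exact hp
    · rw [← hqa]; exact hq
    · rw [← hrq]; exact hr
  · -- extend on the right (second coordinate of `N × N`)
    intro C hC
    obtain ⟨G₂', hG₂'F, hsub₂, hcov₂⟩ := hback G₂ hG₂ C hC
    set D : Set M := Prod.fst '' {p ∈ G₂' | p.2 ∈ C} with hD
    have hDlt : Cardinal.mk D < lam := card_sep_lt (hinF G₂' hG₂'F).2 _
    obtain ⟨H₂, hH₂, hHH₂, hDcov, hH₂rank⟩ := ((rankGe_iff α H).1 hrank β hβ).2 D hDlt
    have hfstlt : Cardinal.mk (Prod.fst '' H₂) < lam :=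
      lt_of_le_of_lt Cardinal.mk_image_le hH₂.2
    obtain ⟨G₁', hG₁'F, hsub₁, hcov₁⟩ := hforth G₁ hG₁ (Prod.fst '' H₂) hfstlt
    refine ⟨myComp G₁' H₂ G₂',
      myComp_inF (hinF G₁' hG₁'F).1 (hinF G₂' hG₂'F).1 hH₂,
      myComp_mono hsub₁ hHH₂ hsub₂, ?_,
      IH β hβ H₂ hH₂ hH₂rank G₁' hG₁'F G₂' hG₂'F⟩
    intro c hc
    obtain ⟨p, hp, hpc⟩ := hcov₂ hc
    have haD : p.1 ∈ D := ⟨p, ⟨hp, by rwa [hpc]⟩, rfl⟩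
    obtain ⟨q, hq, hqa⟩ := hDcov haD
    have : q.1 ∈ Prod.fst '' H₂ := ⟨q, hq, rfl⟩
    obtain ⟨r, hr, hrq⟩ := hcov₁ this
    refine ⟨(r.2, c), ⟨q.1, p.1, ?_, ?_, ?_⟩, rfl⟩
    · rw [← hrq]; exact hr
    · rw [← hqa]; exact hq
    · rw [← hpc]; exact hp

/-- One inclusion between the defining sets of the Karp complexities. -/
lemma KC_set_subset {F : Set (Set (M × N))} (hF : IsBFSys L M N lam F) :
    {α | ∀ G : Set (M × M), InF L M M lam G →
      RankGe L M M lam α G → RankGe L M M lam (α + 1) G} ⊆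
    {α | ∀ G : Set (N × N), InF L N N lam G →
      RankGe L N N lam α G → RankGe L N N lam (α + 1) G} := by
  intro α hα H hH hrank
  obtain ⟨⟨G₀, hG₀⟩, hinF, hforth, hback⟩ := hF
  have hF' : IsBFSys L M N lam F := ⟨⟨G₀, hG₀⟩, hinF, hforth, hback⟩
  have hfstlt : Cardinal.mk (Prod.fst '' H) < lam :=
    lt_of_le_of_lt Cardinal.mk_image_le hH.2
  have hsndlt : Cardinal.mk (Prod.snd '' H) < lam :=
    lt_of_le_of_lt Cardinal.mk_image_le hH.2
  obtain ⟨G₁, hG₁F, -, hcov₁⟩ := hback G₀ hG₀ (Prod.fst '' H) hfstlt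
  obtain ⟨G₂, hG₂F, -, hcov₂⟩ := hback G₀ hG₀ (Prod.snd '' H) hsndlt
  -- pull `H` back to a partial map `M → M`
  set Hstar : Set (M × M) := myComp (Prod.swap '' G₁) H (Prod.swap '' G₂) with hHstar
  have hG₁swap : Prod.swap '' G₁ ∈ (Set.image Prod.swap) '' F := ⟨G₁, hG₁F, rfl⟩
  have hG₂swap : Prod.swap '' G₂ ∈ (Set.image Prod.swap) '' F := ⟨G₂, hG₂F, rfl⟩
  have hHstarInF : InF L M M lam Hstar :=
    myComp_inF (swap_elem (hinF G₁ hG₁F).1) (swap_elem (hinF G₂ hG₂F).1) hH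
  have hHstarRank : RankGe L M M lam α Hstar :=
    transfer (isBFSys_swap hF') α H hH hrank _ hG₁swap _ hG₂swap
  have hHstarRank1 : RankGe L M M lam (α + 1) Hstar := hα Hstar hHstarInF hHstarRank
  have hpush : RankGe L N N lam (α + 1) (myComp G₁ Hstar G₂) :=
    transfer hF' (α + 1) Hstar hHstarInF hHstarRank1 G₁ hG₁F G₂ hG₂F
  refine rankGe_anti ?_ hpush
  rintro ⟨b, b'⟩ hbb'
  obtain ⟨p, hp, hpb⟩ := hcov₁ ⟨(b, b'), hbb', rfl⟩
  obtain ⟨q, hq, hqb⟩ := hcov₂ ⟨(b, b'), hbb', rfl⟩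
  have hpb' : p.2 = b := hpb
  have hqb' : q.2 = b' := hqb
  refine ⟨p.1, q.1, ?_, ⟨b, b', ?_, hbb', ?_⟩, ?_⟩
  · rw [← hpb]; exact hp
  · rw [mem_swap_iff, ← hpb']; exact hp
  · rw [mem_swap_iff, ← hqb']; exact hq
  · rw [← hqb]; exact hq

end Aux

/-- If `M` and `N` are `L_{∞,λ}`-equivalent (there is a back-and-forth system inside
`ℱ_λ(M,N)`), then every member of the system has Rank `≥ α` for every ordinal `α`; in
particular `KC_λ(M) = KC_λ(N)`. -/
theorem bf_system_rank_and_KC (L : FirstOrder.Language) (M N : Type u)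
    [L.Structure M] [L.Structure N] (lam : Cardinal.{u}) (hlam : Cardinal.aleph0 ≤ lam)
    (F : Set (Set (M × N))) (hF : IsBFSys L M N lam F) :
    (∀ G ∈ F, ∀ α : Ordinal, RankGe L M N lam α G) ∧
    KC L M lam = KC L N lam := by
  obtain ⟨hne, hinF, hforth, hback⟩ := hF
  have hF' : IsBFSys L M N lam F := ⟨hne, hinF, hforth, hback⟩
  have key : ∀ α : Ordinal, ∀ G ∈ F, RankGe L M N lam α G := by
    intro α
    induction α using Ordinal.induction with
    | h α IH =>
    intro G hG
    rw [rankGe_iff]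
    intro β hβ
    constructor
    · intro C hC
      obtain ⟨G', hG'F, hsub, hcov⟩ := hforth G hG C hC
      exact ⟨G', hinF G' hG'F, hsub, hcov, IH β hβ G' hG'F⟩
    · intro C hC
      obtain ⟨G', hG'F, hsub, hcov⟩ := hback G hG C hC
      exact ⟨G', hinF G' hG'F, hsub, hcov, IH β hβ G' hG'F⟩
  constructor
  · exact fun G hG α => key α G hG
  · unfold KC
    congr 1
    exact Set.Subset.antisymm (KC_set_subset hF') (KC_set_subset (isBFSys_swap hF'))
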